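/- Let n ≥ 1, let L be a finite set, let ρ be a permutation of [n] ∪ L, and let 0 ≤ i ≤ j ≤ n be such that every element of {i, i+1, …, j} is a fixed point of ρ. Then all the corresponding faces agree: D_i(ρ) = D_{i+1}(ρ) = … = D_j(ρ). (This is the key step showing that all faces taken along a fan of a Sullivan diagram coincide.) -/

import Mathlib

/-- `Option α ⊕ β ≃ Option (α ⊕ β)`, sending `inl none` to `none`. -/
def optionSumEquiv (α β : Type*) : (Option α ⊕ β) ≃ Option (α ⊕ β) where
  toFun x :=
    match x with
    | Sum.inl (some a) => some (Sum.inl a)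
    | Sum.inl none => none
    | Sum.inr b => some (Sum.inr b)
  invFun x :=
    match x with
    | some (Sum.inl a) => Sum.inl (some a)
    | some (Sum.inr b) => Sum.inr b
    | none => Sum.inl none
  left_inv x := by rcases x with (_ | a) | b <;> rfl
  right_inv x := by rcases x with _ | (a | b) <;> rfl

/-- The identification of `[n] ∪ L` with `Option ([n-1] ∪ L)` sending `i` to `none`:
away from `i` it is the order-preserving renormalization `[n] \ {i} → [n-1]`
(the inverse of `d_i`, i.e. the map `s_i` restricted to `[n] \ {i}`), and the identity on `L`. -/
def faceEquiv (n : ℕ) (L : Type*) (i : Fin (n + 1)) :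
    (Fin (n + 1) ⊕ L) ≃ Option (Fin n ⊕ L) :=
  ((finSuccEquiv' i).sumCongr (Equiv.refl L)).trans (optionSumEquiv (Fin n) L)

/-- The `i`-th face map `D_i : Symm([n] ∪ L) → Symm([n-1] ∪ L)`, given by
`D_i(α) = s_i ∘ α ∘ (i α⁻¹(i)) ∘ d_i`, i.e. removing the symbol `i` from the cycle
decomposition of `α` and renormalizing the remaining elements of `[n]`. -/
def faceMap {n : ℕ} {L : Type*} (i : Fin (n + 1)) (α : Equiv.Perm (Fin (n + 1) ⊕ L)) :
    Equiv.Perm (Fin n ⊕ L) :=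
  Equiv.removeNone (((faceEquiv n L i).symm.trans α).trans (faceEquiv n L i))


section
variable {n : ℕ} {L : Type*}


-- basic computation lemmas
lemma faceEquiv_inl (i z : Fin (n + 1)) :
    faceEquiv n L i (Sum.inl z) = (finSuccEquiv' i z).map Sum.inl := by
  rcases h : finSuccEquiv' i z with _ | t <;>
    simp [faceEquiv, optionSumEquiv, h]

lemma faceEquiv_inr (i : Fin (n + 1)) (l : L) :
    faceEquiv n L i (Sum.inr l) = some (Sum.inr l) := rfl

lemma faceEquiv_symm_some_inl (i : Fin (n + 1)) (t : Fin n) :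
    (faceEquiv n L i).symm (some (Sum.inl t)) = Sum.inl (i.succAbove t) := by
  simp [faceEquiv, optionSumEquiv, finSuccEquiv'_symm_some]

lemma faceEquiv_symm_some_inr (i : Fin (n + 1)) (l : L) :
    (faceEquiv n L i).symm (some (Sum.inr l)) = Sum.inr l := rfl

lemma faceEquiv_symm_none (i : Fin (n + 1)) :
    (faceEquiv n L i).symm none = Sum.inl i := by
  simp [faceEquiv, optionSumEquiv, finSuccEquiv'_symm_none]

lemma faceMap_apply_of_fix (i : Fin (n + 1)) (ρ : Equiv.Perm (Fin (n + 1) ⊕ L))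
    (h : ρ (Sum.inl i) = Sum.inl i) (x : Fin n ⊕ L) :
    some (faceMap i ρ x) = faceEquiv n L i (ρ ((faceEquiv n L i).symm (some x))) := by
  apply Equiv.removeNone_some
  rcases he : (((faceEquiv n L i).symm.trans ρ).trans (faceEquiv n L i)) (some x) with _ | x'
  · exfalso
    have : ρ ((faceEquiv n L i).symm (some x)) = Sum.inl i := by
      have := congrArg (faceEquiv n L i).symm he
      simpa [faceEquiv_symm_none] using this
    have : (faceEquiv n L i).symm (some x) = Sum.inl i := ρ.injective (by rw [this, h])
    have := congrArg (faceEquiv n L i) this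
    simp [faceEquiv_inl, finSuccEquiv'_at] at this
  · exact ⟨x', rfl⟩

lemma finSuccEquiv'_congr {m : ℕ} (hm : m + 1 ≤ n) (z : Fin (n + 1))
    (h0 : z.val ≠ m) (h1 : z.val ≠ m + 1) :
    finSuccEquiv' (⟨m, by omega⟩ : Fin (n + 1)) z
      = finSuccEquiv' (⟨m + 1, by omega⟩ : Fin (n + 1)) z := by
  rcases lt_or_ge z.val m with h | h
  · have hz : z = Fin.castSucc ⟨z.val, by omega⟩ := by ext; simp
    rw [hz, finSuccEquiv'_below (by simp [Fin.lt_def]; omega),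
      finSuccEquiv'_below (by simp [Fin.lt_def]; omega)]
  · have h2 : m + 2 ≤ z.val := by omega
    have hz : z = Fin.succ ⟨z.val - 1, by omega⟩ := by ext; simp; omega
    rw [hz, finSuccEquiv'_above (by simp [Fin.le_def]; omega),
      finSuccEquiv'_above (by simp [Fin.le_def]; omega)]

lemma faceMap_adj {m : ℕ} (hm : m + 1 ≤ n) (ρ : Equiv.Perm (Fin (n + 1) ⊕ L))
    (h0 : ρ (Sum.inl ⟨m, by omega⟩) = Sum.inl ⟨m, by omega⟩)
    (h1 : ρ (Sum.inl ⟨m + 1, by omega⟩) = Sum.inl ⟨m + 1, by omega⟩) :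
    faceMap (⟨m + 1, by omega⟩ : Fin (n + 1)) ρ = faceMap (⟨m, by omega⟩ : Fin (n + 1)) ρ := by
  set i₀ : Fin (n + 1) := ⟨m, by omega⟩
  set i₁ : Fin (n + 1) := ⟨m + 1, by omega⟩
  have key : ∀ z : Fin (n + 1), z.val ≠ m → z.val ≠ m + 1 →
      faceEquiv n L i₁ (Sum.inl z) = faceEquiv n L i₀ (Sum.inl z) := by
    intro z hz0 hz1
    rw [faceEquiv_inl, faceEquiv_inl, finSuccEquiv'_congr hm z hz0 hz1]
  have keyρ : ∀ w : Fin (n + 1) ⊕ L, w ≠ Sum.inl i₀ → w ≠ Sum.inl i₁ →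
      faceEquiv n L i₁ (ρ w) = faceEquiv n L i₀ (ρ w) := by
    intro w hw0 hw1
    rcases hρ : ρ w with z | l
    · apply key
      · intro hz
        apply hw0
        apply ρ.injective
        rw [hρ, h0]
        congr 1
        ext; exact hz
      · intro hz
        apply hw1
        apply ρ.injective
        rw [hρ, h1]
        congr 1
        ext; exact hz
    · rfl
  ext x
  apply Option.some_injective
  rw [faceMap_apply_of_fix i₁ ρ h1 x, faceMap_apply_of_fix i₀ ρ h0 x]
  rcases x with t | l
  · rw [faceEquiv_symm_some_inl, faceEquiv_symm_some_inl]
    rcases eq_or_ne t.val m with ht | ht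
    · have e0 : i₀.succAbove t = i₁ := by
        have : ¬ Fin.castSucc t < i₀ := by simp [Fin.lt_def, ht, i₀, i₁]
        rw [Fin.succAbove_of_le_castSucc _ _ (by simp [Fin.le_def, ht, i₀, i₁])]
        ext; simp [ht, i₀, i₁]
      have e1 : i₁.succAbove t = i₀ := by
        rw [Fin.succAbove_of_castSucc_lt _ _ (by simp [Fin.lt_def, ht, i₀, i₁])]
        ext; simp [ht, i₀, i₁]
      rw [e0, e1, h0, h1, faceEquiv_inl, faceEquiv_inl]
      have a0 : finSuccEquiv' i₀ i₁ = some ⟨m, by omega⟩ := by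
        have h' : i₁ = Fin.succ (⟨m, by omega⟩ : Fin n) := by ext; simp [i₀, i₁]
        rw [h']
        exact finSuccEquiv'_above (i := i₀) (m := ⟨m, by omega⟩)
          (by simp [Fin.le_def, i₀, i₁])
      have a1 : finSuccEquiv' i₁ i₀ = some ⟨m, by omega⟩ := by
        have h' : i₀ = Fin.castSucc (⟨m, by omega⟩ : Fin n) := by ext; simp [i₀, i₁]
        rw [h']
        exact finSuccEquiv'_below (i := i₁) (m := ⟨m, by omega⟩)
          (by simp [Fin.lt_def, i₀, i₁])
      rw [a0, a1]
    · have hsucc : i₁.succAbove t = i₀.succAbove t := by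
        rcases lt_or_ge t.val m with h | h
        · rw [Fin.succAbove_of_castSucc_lt _ _ (by simp [Fin.lt_def, i₀, i₁]; omega),
            Fin.succAbove_of_castSucc_lt _ _ (by simp [Fin.lt_def, i₀, i₁]; omega)]
        · have : m + 1 ≤ t.val := by omega
          rw [Fin.succAbove_of_le_castSucc _ _ (by simp [Fin.le_def, i₀, i₁]; omega),
            Fin.succAbove_of_le_castSucc _ _ (by simp [Fin.le_def, i₀, i₁]; omega)]
      rw [hsucc]
      apply keyρ
      · intro hw
        have := Fin.succAbove_ne i₀ t
        exact this (Sum.inl.inj hw)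
      · intro hw
        have := Fin.succAbove_ne i₁ t
        rw [hsucc] at this
        exact this (Sum.inl.inj hw)
  · rw [faceEquiv_symm_some_inr, faceEquiv_symm_some_inr]
    apply keyρ <;> simp

end


/-- For `n ≥ 1` (here `[n]` is realized as `Fin (n+2)` with `n ↦ n+1`),
a finite set `L`, a permutation `ρ` of `[n] ∪ L`, and `0 ≤ i ≤ j ≤ n` such that every
element of `{i, i+1, …, j}` is a fixed point of `ρ`, all the corresponding faces agree:
`D_i(ρ) = D_{i+1}(ρ) = … = D_j(ρ)`. -/

theorem stmt_4 {L : Type} [Finite L] (n : ℕ) (ρ : Equiv.Perm (Fin (n + 2) ⊕ L))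
    (i j : ℕ) (hij : i ≤ j) (hj : j ≤ n + 1)
    (hfix : ∀ (k : ℕ) (hik : i ≤ k) (hkj : k ≤ j),
      ρ (Sum.inl (⟨k, by omega⟩ : Fin (n + 2))) = Sum.inl (⟨k, by omega⟩ : Fin (n + 2))) :
    ∀ (k : ℕ) (hik : i ≤ k) (hkj : k ≤ j),
      faceMap (⟨k, by omega⟩ : Fin (n + 2)) ρ = faceMap (⟨i, by omega⟩ : Fin (n + 2)) ρ := by
  intro k
  induction k with
  | zero =>
    intro hik hkj
    have h0 : i = 0 := by omega
    subst h0
    rfl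
  | succ k ih =>
    intro hik hkj
    rcases eq_or_lt_of_le hik with h | h
    · subst h; rfl
    · have hik' : i ≤ k := by omega
      have hkj' : k ≤ j := by omega
      rw [faceMap_adj (n := n + 1) (m := k) (by omega) ρ
        (hfix k hik' hkj') (hfix (k + 1) (by omega) hkj)]
      exact ih hik' hkj'
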